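/- Let n ≥ 3, let 0 < α < min{2, n/2}, let β = (4−2α)/(n−2), and let γ, γ̃ ∈ (0,1) satisfy (α − γ̃ − β)/(β+1) ≤ γ ≤ (α − γ̃)/(β+1) and γ < (n−2)/2. Then there exists a real number x with all of the following: (1+γ)/n < x; 1/2 − (1−γ)/n ≤ x < 1/2; and 1/(2(β+1)) + γ/n + (γ̃ + β − α)/(n(β+1)) < x < 1/(2(β+1)) + γ/n + (1 + β − α)/(n(β+1)). -/
import Mathlib
set_option maxHeartbeats 800000


/-- Exponent compatibility: under the energy-critical assumptions there exists a common
reciprocal exponent `x = 1/r` satisfying simultaneously `(1+γ)/n < x`, the admissibility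
range `1/2 - (1-γ)/n ≤ x < 1/2`, and the range induced through Hölder scaling by
`γ̃`-admissible pairs `(q̃,r̃)` with `q̃ > 2`. -/
theorem common_exponent_exists (n : ℕ) (hn : 3 ≤ n) (α β γ γt : ℝ)
    (hα0 : 0 < α) (hα : α < min 2 ((n : ℝ) / 2)) (hβ : β = (4 - 2 * α) / ((n : ℝ) - 2))
    (hγ0 : 0 < γ) (hγ1 : γ < 1) (hγt0 : 0 < γt) (hγt1 : γt < 1)
    (hg1 : (α - γt - β) / (β + 1) ≤ γ) (hg2 : γ ≤ (α - γt) / (β + 1))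
    (hg3 : γ < ((n : ℝ) - 2) / 2) :
    ∃ x : ℝ,
      (1 + γ) / n < x ∧
      (1 / 2 - (1 - γ) / n ≤ x ∧ x < 1 / 2) ∧
      (1 / (2 * (β + 1)) + γ / n + (γt + β - α) / (n * (β + 1)) < x ∧
        x < 1 / (2 * (β + 1)) + γ / n + (1 + β - α) / (n * (β + 1))) := by
  have hn3 : (3 : ℝ) ≤ (n : ℝ) := by exact_mod_cast hn
  have hnpos : (0 : ℝ) < n := by linarith
  have hnne : ((n : ℝ)) ≠ 0 := ne_of_gt hnpos
  have hα2 : α < 2 := lt_of_lt_of_le hα (min_le_left _ _)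
  have hαn : α < (n : ℝ) / 2 := lt_of_lt_of_le hα (min_le_right _ _)
  have hn2 : (0 : ℝ) < (n : ℝ) - 2 := by linarith
  have hβpos : 0 < β := by rw [hβ]; apply div_pos <;> linarith
  have hβ1 : 0 < β + 1 := by linarith
  have hβ1ne : β + 1 ≠ 0 := ne_of_gt hβ1
  have hβeq : β * ((n : ℝ) - 2) = 4 - 2 * α := by
    rw [hβ]; field_simp
  have hg2' : γ * (β + 1) ≤ α - γt := (le_div_iff₀ hβ1).mp hg2
  set L : ℝ := 1 / (2 * (β + 1)) + γ / n + (γt + β - α) / (n * (β + 1)) with hL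
  set U : ℝ := 1 / (2 * (β + 1)) + γ / n + (1 + β - α) / (n * (β + 1)) with hU
  set a : ℝ := max ((1 + γ) / n) (max (1 / 2 - (1 - γ) / n) L) with ha
  set b : ℝ := min (1 / 2) U with hb
  -- six inequalities
  have h1 : (1 + γ) / n < 1 / 2 := by
    rw [div_lt_iff₀ hnpos]; linarith
  have h2 : (1 + γ) / n < U := by
    have hsplit : (1 + γ) / (n : ℝ) = γ / n + 1 / n := by ring
    have hdiff : 1 / (2 * (β + 1)) + (1 + β - α) / ((n : ℝ) * (β + 1)) - 1 / n
        = ((n : ℝ) / 2 - α) / (n * (β + 1)) := by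
      field_simp; ring
    have hpos : (0 : ℝ) < ((n : ℝ) / 2 - α) / (n * (β + 1)) :=
      div_pos (by linarith) (by positivity)
    rw [hU, hsplit]; linarith
  have h3 : 1 / 2 - (1 - γ) / n < 1 / 2 := by
    have : 0 < (1 - γ) / (n : ℝ) := div_pos (by linarith) hnpos
    linarith
  have h4 : 1 / 2 - (1 - γ) / n < U := by
    have hdiff : U + (1 - γ) / (n : ℝ) - 1 / 2
        = (4 + 4 * β - 2 * α - (n : ℝ) * β) / (2 * ((n : ℝ) * (β + 1))) := by
      rw [hU]; field_simp; ring
    have hnum : (0 : ℝ) < 4 + 4 * β - 2 * α - (n : ℝ) * β := by nlinarith [hβeq]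
    have hpos : (0 : ℝ) < (4 + 4 * β - 2 * α - (n : ℝ) * β) / (2 * ((n : ℝ) * (β + 1))) :=
      div_pos hnum (by positivity)
    linarith
  have h5 : L < 1 / 2 := by
    have hdiff : 1 / 2 - L
        = ((n : ℝ) * β - 2 * γ * (β + 1) - 2 * γt - 2 * β + 2 * α)
          / (2 * ((n : ℝ) * (β + 1))) := by
      rw [hL]; field_simp; ring
    have hnum : (0 : ℝ) < (n : ℝ) * β - 2 * γ * (β + 1) - 2 * γt - 2 * β + 2 * α := by
      nlinarith [mul_pos hn2 hβpos]
    have hpos : (0 : ℝ) < ((n : ℝ) * β - 2 * γ * (β + 1) - 2 * γt - 2 * β + 2 * α)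
        / (2 * ((n : ℝ) * (β + 1))) := div_pos hnum (by positivity)
    linarith
  have h6 : L < U := by
    rw [hL, hU]
    have hp : (0 : ℝ) < (n : ℝ) * (β + 1) := by positivity
    have : (γt + β - α) / ((n : ℝ) * (β + 1)) < (1 + β - α) / ((n : ℝ) * (β + 1)) :=
      (div_lt_div_iff_of_pos_right hp).mpr (by linarith)
    linarith
  clear_value L U a b
  have hab : a < b := by
    rw [ha, hb]
    simp only [max_lt_iff, lt_min_iff]
    exact ⟨⟨h1, h3, h5⟩, h2, h4, h6⟩
  refine ⟨(a + b) / 2, ?_, ⟨?_, ?_⟩, ?_, ?_⟩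
  · have : (1 + γ) / n ≤ a := ha ▸ le_max_left _ _
    linarith
  · have : 1 / 2 - (1 - γ) / n ≤ a := ha ▸ le_trans (le_max_left _ _) (le_max_right _ _)
    linarith
  · have : b ≤ 1 / 2 := hb ▸ min_le_left _ _
    linarith
  · have : L ≤ a := ha ▸ le_trans (le_max_right _ _) (le_max_right _ _)
    linarith
  · have : b ≤ U := hb ▸ min_le_right _ _
    linarith
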